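/- In the metric space (C(H,K), d), the distance from any X to -X satisfies d(X, -X) = 2 d(X, 0). -/

import Mathlib

/-- `artanh x = ½ log((1+x)/(1-x))`, the inverse hyperbolic tangent. -/
noncomputable def artanh (x : ℝ) : ℝ := (1 / 2) * Real.log ((1 + x) / (1 - x))

/-- The Poincaré distance `ω(a,b) = tanh⁻¹ (|a-b| / |1 - āb|)` on the open unit disc. -/
noncomputable def poincareDist (a b : ℂ) : ℝ :=
  artanh (‖a - b‖ / ‖1 - (starRingEnd ℂ) a * b‖)

variable {X : Type*} [NormedAddCommGroup X] [NormedSpace ℂ X]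

/-- An analytic chain joining `x` and `y` in the open unit ball of a complex Banach
space `X`: holomorphic maps `f 0, …, f n` from the unit disc into the ball, together with
points `z i, w i` of the disc, such that `f 0 (z 0) = x`, `f n (w n) = y` and
`f i (w i) = f (i+1) (z (i+1))`. -/
structure AnalyticChain (x y : X) where
  n : ℕ
  f : Fin (n + 1) → ℂ → X
  z : Fin (n + 1) → ℂ
  w : Fin (n + 1) → ℂ
  holo : ∀ i, DifferentiableOn ℂ (f i) (Metric.ball 0 1)
  maps : ∀ i, ∀ c ∈ Metric.ball (0 : ℂ) 1, f i c ∈ Metric.ball (0 : X) 1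
  z_mem : ∀ i, z i ∈ Metric.ball (0 : ℂ) 1
  w_mem : ∀ i, w i ∈ Metric.ball (0 : ℂ) 1
  first : f 0 (z 0) = x
  last : f (Fin.last n) (w (Fin.last n)) = y
  link : ∀ i : Fin n, f i.castSucc (w i.castSucc) = f i.succ (z i.succ)

/-- The length `∑ ω(zᵢ, wᵢ)` of an analytic chain. -/
noncomputable def AnalyticChain.length {x y : X} (c : AnalyticChain x y) : ℝ :=
  ∑ i, poincareDist (c.z i) (c.w i)

/-- The Kobayashi (pseudo-)distance on the open unit ball of `X`: the infimum of lengths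
of analytic chains joining `x` and `y`. -/
noncomputable def kobayashiDist (x y : X) : ℝ :=
  sInf (Set.range fun c : AnalyticChain x y => c.length)

open Complex Metric in
noncomputable def pd (a b : ℂ) : ℝ :=
  ‖a - b‖ / ‖1 - (starRingEnd ℂ) a * b‖

lemma poincareDist_eq (a b : ℂ) : poincareDist a b = artanh (pd a b) := rfl

open Complex Metric


-- key identity
lemma key_id (a b : ℂ) :
    Complex.normSq (1 - (starRingEnd ℂ) a * b) - Complex.normSq (a - b)
      = (1 - Complex.normSq a) * (1 - Complex.normSq b) := by
  simp only [Complex.normSq_apply, Complex.sub_re, Complex.sub_im, Complex.one_re, Complex.one_im,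
    Complex.mul_re, Complex.mul_im, Complex.conj_re, Complex.conj_im]
  ring

lemma abs_sub_lt (a b : ℂ) (ha : ‖a‖ < 1) (hb : ‖b‖ < 1) :
    ‖a - b‖ < ‖1 - (starRingEnd ℂ) a * b‖ := by
  have h1 : Complex.normSq a < 1 := by
    rw [← Complex.sq_norm]; nlinarith [norm_nonneg a]
  have h2 : Complex.normSq b < 1 := by
    rw [← Complex.sq_norm]; nlinarith [norm_nonneg b]
  have := key_id a b
  have h3 : Complex.normSq (a - b) < Complex.normSq (1 - (starRingEnd ℂ) a * b) := by nlinarith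
  have := norm_nonneg (a - b)
  have := norm_nonneg (1 - (starRingEnd ℂ) a * b)
  rw [← Complex.sq_norm, ← Complex.sq_norm] at h3
  nlinarith

lemma denom_ne (a b : ℂ) (ha : ‖a‖ < 1) (hb : ‖b‖ < 1) :
    1 - (starRingEnd ℂ) a * b ≠ 0 := by
  intro h
  have := abs_sub_lt a b ha hb
  rw [h] at this
  simp at this
  have := norm_nonneg (a - b)
  linarith

lemma pd_nonneg (a b : ℂ) : 0 ≤ pd a b :=
  div_nonneg (norm_nonneg _) (norm_nonneg _)

lemma pd_lt_one (a b : ℂ) (ha : ‖a‖ < 1) (hb : ‖b‖ < 1) : pd a b < 1 := by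
  have h := abs_sub_lt a b ha hb
  have h2 : 0 < ‖1 - (starRingEnd ℂ) a * b‖ :=
    norm_pos_iff.mpr (denom_ne a b ha hb)
  rw [pd, div_lt_one h2]; exact h

lemma pd_symm (a b : ℂ) : pd a b = pd b a := by
  unfold pd
  rw [norm_sub_rev]
  congr 1
  rw [← Complex.norm_conj]
  congr 1
  simp [mul_comm]

lemma pd_zero_right (a : ℂ) : pd a 0 = ‖a‖ := by simp [pd]

lemma artanh_zero : artanh 0 = 0 := by simp [artanh]

lemma one_add_div_one_sub_pos {x : ℝ} (h1 : -1 < x) (h2 : x < 1) : 0 < (1 + x) / (1 - x) :=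
  div_pos (by linarith) (by linarith)

lemma artanh_mono {x y : ℝ} (h1 : -1 < x) (hxy : x ≤ y) (h2 : y < 1) : artanh x ≤ artanh y := by
  unfold artanh
  have hx2 : x < 1 := lt_of_le_of_lt hxy h2
  have hy1 : -1 < y := lt_of_lt_of_le h1 hxy
  have hle : (1 + x) / (1 - x) ≤ (1 + y) / (1 - y) := by
    rw [div_le_div_iff₀ (by linarith) (by linarith)]
    nlinarith
  have := Real.log_le_log (one_add_div_one_sub_pos h1 hx2) hle
  linarith

lemma artanh_nonneg {x : ℝ} (h0 : 0 ≤ x) (h1 : x < 1) : 0 ≤ artanh x := by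
  unfold artanh
  have : (1:ℝ) ≤ (1 + x) / (1 - x) := by
    rw [le_div_iff₀ (by linarith)]; linarith
  have := Real.log_nonneg this
  linarith

lemma artanh_add {u v : ℝ} (hu0 : 0 ≤ u) (hu : u < 1) (hv0 : 0 ≤ v) (hv : v < 1) :
    artanh u + artanh v = artanh ((u + v) / (1 + u * v)) := by
  unfold artanh
  have huv : (0:ℝ) < 1 + u * v := by nlinarith
  have h1 : 1 + (u + v) / (1 + u * v) = (1 + u) * (1 + v) / (1 + u * v) := by
    field_simp; ring
  have h2 : 1 - (u + v) / (1 + u * v) = (1 - u) * (1 - v) / (1 + u * v) := by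
    field_simp; ring
  rw [h1, h2]
  have h3 : (1 + u) * (1 + v) / (1 + u * v) / ((1 - u) * (1 - v) / (1 + u * v))
      = (1 + u) * (1 + v) / ((1 - u) * (1 - v)) := by
    field_simp
  rw [h3]
  have pu1 : (0:ℝ) < 1 + u := by linarith
  have pu2 : (0:ℝ) < 1 - u := by linarith
  have pv1 : (0:ℝ) < 1 + v := by linarith
  have pv2 : (0:ℝ) < 1 - v := by linarith
  rw [Real.log_div (mul_pos pu1 pv1).ne' (mul_pos pu2 pv2).ne', Real.log_mul pu1.ne' pv1.ne',
    Real.log_mul pu2.ne' pv2.ne', Real.log_div pu1.ne' pu2.ne', Real.log_div pv1.ne' pv2.ne']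
  ring

noncomputable def moeb (c z : ℂ) : ℂ := (c - z) / (1 - (starRingEnd ℂ) c * z)

lemma abs_moeb (c z : ℂ) : ‖moeb c z‖ = pd c z := by
  simp [moeb, pd, norm_div]

lemma moeb_self (c : ℂ) : moeb c c = 0 := by simp [moeb]

lemma moeb_zero (c : ℂ) : moeb c 0 = c := by simp [moeb]

lemma moeb_mem {c z : ℂ} (hc : ‖c‖ < 1) (hz : ‖z‖ < 1) :
    ‖moeb c z‖ < 1 := by
  rw [abs_moeb]; exact pd_lt_one c z hc hz

lemma moeb_invol {c z : ℂ} (hc : ‖c‖ < 1) (hz : ‖z‖ < 1) :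
    moeb c (moeb c z) = z := by
  have h1 : 1 - (starRingEnd ℂ) c * z ≠ 0 := denom_ne c z hc hz
  have h2 : 1 - (starRingEnd ℂ) c * c ≠ 0 := denom_ne c c hc hc
  have h1' : 1 - z * (starRingEnd ℂ) c ≠ 0 := by rwa [mul_comm]
  unfold moeb
  have hnum : c - (c - z) / (1 - (starRingEnd ℂ) c * z)
      = z * (1 - (starRingEnd ℂ) c * c) / (1 - (starRingEnd ℂ) c * z) := by
    field_simp; ring
  have hden : 1 - (starRingEnd ℂ) c * ((c - z) / (1 - (starRingEnd ℂ) c * z))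
      = (1 - (starRingEnd ℂ) c * c) / (1 - (starRingEnd ℂ) c * z) := by
    field_simp; ring
  rw [hnum, hden]
  field_simp

lemma moeb_diffOn {c : ℂ} (hc : ‖c‖ < 1) :
    DifferentiableOn ℂ (moeb c) (Metric.ball 0 1) := by
  apply DifferentiableOn.div
  · exact (differentiable_const c |>.sub differentiable_id).differentiableOn
  · exact (differentiable_const (1:ℂ) |>.sub ((differentiable_const _).mul differentiable_id)).differentiableOn
  · intro z hz
    exact denom_ne c z hc (by simpa using mem_ball_zero_iff.mp hz)

lemma conj_moeb (b a : ℂ) : (starRingEnd ℂ) (moeb b a)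
    = ((starRingEnd ℂ) b - (starRingEnd ℂ) a) / (1 - b * (starRingEnd ℂ) a) := by
  simp [moeb, map_div₀, map_sub, map_mul, mul_comm]

lemma pd_moeb {b a c : ℂ} (hb : ‖b‖ < 1) (ha : ‖a‖ < 1)
    (hc : ‖c‖ < 1) : pd (moeb b a) (moeb b c) = pd a c := by
  have hba : 1 - (starRingEnd ℂ) b * a ≠ 0 := denom_ne b a hb ha
  have hbc : 1 - (starRingEnd ℂ) b * c ≠ 0 := denom_ne b c hb hc
  have hbb : 1 - (starRingEnd ℂ) b * b ≠ 0 := denom_ne b b hb hb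
  have hac : 1 - (starRingEnd ℂ) a * c ≠ 0 := denom_ne a c ha hc
  have hab' : 1 - b * (starRingEnd ℂ) a ≠ 0 := by
    intro h; apply hba
    have := congrArg (starRingEnd ℂ) h
    simpa [map_sub, map_mul, mul_comm] using this
  have hba2 : 1 - a * (starRingEnd ℂ) b ≠ 0 := by rwa [mul_comm]
  have hbc2 : 1 - c * (starRingEnd ℂ) b ≠ 0 := by rwa [mul_comm]
  have hab2 : 1 - (starRingEnd ℂ) a * b ≠ 0 := by rwa [mul_comm]
  have hac2 : 1 - c * (starRingEnd ℂ) a ≠ 0 := by rwa [mul_comm]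
  have I1 : moeb b a - moeb b c
      = (a - c) * ((starRingEnd ℂ) b * b - 1) / ((1 - (starRingEnd ℂ) b * a) * (1 - (starRingEnd ℂ) b * c)) := by
    unfold moeb
    field_simp
    ring
  have I2 : 1 - (starRingEnd ℂ) (moeb b a) * moeb b c
      = (1 - (starRingEnd ℂ) b * b) * (1 - (starRingEnd ℂ) a * c)
        / ((1 - b * (starRingEnd ℂ) a) * (1 - (starRingEnd ℂ) b * c)) := by
    rw [conj_moeb]
    unfold moeb
    field_simp
    ring
  unfold pd
  rw [I1, I2]
  rw [norm_div, norm_div, norm_mul, norm_mul, norm_mul, norm_mul]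
  have e1 : ‖(starRingEnd ℂ) b * b - 1‖ = ‖1 - (starRingEnd ℂ) b * b‖ :=
    norm_sub_rev _ _
  have e2 : ‖1 - b * (starRingEnd ℂ) a‖ = ‖1 - (starRingEnd ℂ) b * a‖ := by
    rw [← Complex.norm_conj (1 - b * (starRingEnd ℂ) a)]
    simp [map_sub, map_mul, mul_comm]
  rw [e1, e2]
  have p1 : 0 < ‖1 - (starRingEnd ℂ) b * a‖ := norm_pos_iff.mpr hba
  have p2 : 0 < ‖1 - (starRingEnd ℂ) b * c‖ := norm_pos_iff.mpr hbc
  have p3 : 0 < ‖1 - (starRingEnd ℂ) b * b‖ := norm_pos_iff.mpr hbb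
  have p4 : 0 < ‖1 - (starRingEnd ℂ) a * c‖ := norm_pos_iff.mpr hac
  have p1' : 0 < ‖1 - a * (starRingEnd ℂ) b‖ := norm_pos_iff.mpr hba2
  have p2' : 0 < ‖1 - c * (starRingEnd ℂ) b‖ := norm_pos_iff.mpr hbc2
  have p4' : 0 < ‖1 - c * (starRingEnd ℂ) a‖ := norm_pos_iff.mpr hac2
  field_simp

lemma pd_center_le {x y : ℂ} (hx : ‖x‖ < 1) (hy : ‖y‖ < 1) :
    pd x y ≤ (‖x‖ + ‖y‖) / (1 + ‖x‖ * ‖y‖) := by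
  set r := ‖x‖ with hr
  set s := ‖y‖ with hs
  have hr0 : 0 ≤ r := norm_nonneg x
  have hs0 : 0 ≤ s := norm_nonneg y
  set u := ((starRingEnd ℂ) x * y).re with hu
  have habs : ‖(starRingEnd ℂ) x * y‖ = r * s := by
    rw [norm_mul, Complex.norm_conj]
  have hure : -(r*s) ≤ u := by
    have := Complex.abs_re_le_norm ((starRingEnd ℂ) x * y)
    rw [habs] at this
    cases abs_le.mp this with
    | intro h1 h2 => linarith
  have hn1 : Complex.normSq (x - y) = r^2 + s^2 - 2*u := by
    rw [hr, hs, Complex.sq_norm, Complex.sq_norm]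
    simp only [hu, Complex.normSq_apply, Complex.sub_re, Complex.sub_im,
      Complex.mul_re, Complex.mul_im, Complex.conj_re, Complex.conj_im]
    ring
  have hn2 : Complex.normSq (1 - (starRingEnd ℂ) x * y) = 1 + r^2*s^2 - 2*u := by
    rw [hr, hs, Complex.sq_norm, Complex.sq_norm]
    simp only [hu, Complex.normSq_apply, Complex.sub_re, Complex.sub_im,
      Complex.one_re, Complex.one_im, Complex.mul_re, Complex.mul_im, Complex.conj_re,
      Complex.conj_im]
    ring
  have hden : 0 < ‖1 - (starRingEnd ℂ) x * y‖ := norm_pos_iff.mpr (denom_ne x y hx hy)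
  have hden2 : (0:ℝ) < 1 + r * s := by nlinarith
  rw [pd, div_le_div_iff₀ hden hden2]
  -- suffices squared inequality
  have hgoal2 : (‖x - y‖ * (1 + r * s))^2
      ≤ ((r + s) * ‖1 - (starRingEnd ℂ) x * y‖)^2 := by
    rw [mul_pow, mul_pow, Complex.sq_norm, Complex.sq_norm, hn1, hn2]
    have key : (r+s)^2*(1 + r^2*s^2 - 2*u) - (r^2 + s^2 - 2*u)*(1+r*s)^2
        = 2*(u + r*s)*((1-r^2)*(1-s^2)) := by ring
    have f1 : 0 ≤ u + r*s := by linarith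
    have f2 : 0 ≤ (1-r^2)*(1-s^2) := mul_nonneg (by nlinarith) (by nlinarith)
    nlinarith [mul_nonneg f1 f2]
  have hl : 0 ≤ ‖x - y‖ * (1 + r * s) :=
    mul_nonneg (norm_nonneg _) (by linarith)
  have hr' : 0 ≤ (r + s) * ‖1 - (starRingEnd ℂ) x * y‖ :=
    mul_nonneg (by linarith) (norm_nonneg _)
  nlinarith [hgoal2]

lemma pd_triangle {a b c : ℂ} (ha : ‖a‖ < 1) (hb : ‖b‖ < 1)
    (hc : ‖c‖ < 1) :
    pd a c ≤ (pd a b + pd b c) / (1 + pd a b * pd b c) := by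
  have h1 : pd a c = pd (moeb b a) (moeb b c) := (pd_moeb hb ha hc).symm
  have h2 : ‖moeb b a‖ = pd a b := by rw [abs_moeb, pd_symm]
  have h3 : ‖moeb b c‖ = pd b c := abs_moeb b c
  rw [h1, ← h2, ← h3]
  exact pd_center_le (moeb_mem hb ha) (moeb_mem hb hc)

lemma poincareDist_nonneg {a b : ℂ} (ha : ‖a‖ < 1) (hb : ‖b‖ < 1) :
    0 ≤ poincareDist a b :=
  artanh_nonneg (pd_nonneg a b) (pd_lt_one a b ha hb)

lemma poincareDist_triangle {a b c : ℂ} (ha : ‖a‖ < 1) (hb : ‖b‖ < 1)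
    (hc : ‖c‖ < 1) :
    poincareDist a c ≤ poincareDist a b + poincareDist b c := by
  rw [poincareDist_eq, poincareDist_eq, poincareDist_eq]
  have p := pd_nonneg a b
  have q := pd_nonneg b c
  have p1 := pd_lt_one a b ha hb
  have q1 := pd_lt_one b c hb hc
  rw [artanh_add p p1 q q1]
  apply artanh_mono (by linarith [pd_nonneg a c]) (pd_triangle ha hb hc)
  rw [div_lt_one (by nlinarith)]
  nlinarith

lemma poincareDist_mono {x y : ℝ} (h0 : 0 ≤ x) (hxy : x ≤ y) (h1 : y < 1) :
    artanh x ≤ artanh y := artanh_mono (by linarith) hxy h1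

lemma mem_ball_iff_abs {z : ℂ} : z ∈ Metric.ball (0:ℂ) 1 ↔ ‖z‖ < 1 := by
  rw [mem_ball_zero_iff]

-- Schwarz-Pick
lemma schwarz_pick {h : ℂ → ℂ} (hd : DifferentiableOn ℂ h (Metric.ball 0 1))
    (hm : Set.MapsTo h (Metric.ball 0 1) (Metric.ball 0 1))
    {a b : ℂ} (ha : ‖a‖ < 1) (hb : ‖b‖ < 1) :
    pd (h a) (h b) ≤ pd a b := by
  have hha : ‖h a‖ < 1 :=
    mem_ball_iff_abs.mp (hm (mem_ball_iff_abs.mpr ha))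
  have hmapsa : Set.MapsTo (moeb a) (Metric.ball 0 1) (Metric.ball 0 1) := by
    intro z hz
    exact mem_ball_iff_abs.mpr (moeb_mem ha (mem_ball_iff_abs.mp hz))
  have d1 : DifferentiableOn ℂ (h ∘ moeb a) (Metric.ball 0 1) :=
    hd.comp (moeb_diffOn ha) hmapsa
  have hgd : DifferentiableOn ℂ (moeb (h a) ∘ (h ∘ moeb a)) (Metric.ball 0 1) :=
    (moeb_diffOn hha).comp d1 (hm.comp hmapsa)
  have hgm : Set.MapsTo (moeb (h a) ∘ (h ∘ moeb a)) (Metric.ball 0 1) (Metric.ball 0 1) := by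
    intro z hz
    exact mem_ball_iff_abs.mpr (moeb_mem hha (mem_ball_iff_abs.mp (hm (hmapsa hz))))
  have hg0 : (moeb (h a) ∘ (h ∘ moeb a)) 0 = 0 := by
    simp only [Function.comp_apply, moeb_zero]
    exact moeb_self (h a)
  have hab : ‖moeb a b‖ < 1 := moeb_mem ha hb
  have h5 := Complex.norm_le_norm_of_mapsTo_ball hgd (hgm.mono_right ball_subset_closedBall) hg0 hab
  have h6 : (moeb (h a) ∘ (h ∘ moeb a)) (moeb a b) = moeb (h a) (h b) := by
    simp only [Function.comp_apply]
    rw [moeb_invol ha hb]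
  rw [h6, abs_moeb, abs_moeb] at h5
  exact h5

lemma poincare_SP {h : ℂ → ℂ} (hd : DifferentiableOn ℂ h (Metric.ball 0 1))
    (hm : Set.MapsTo h (Metric.ball 0 1) (Metric.ball 0 1))
    {a b : ℂ} (ha : ‖a‖ < 1) (hb : ‖b‖ < 1) :
    poincareDist (h a) (h b) ≤ poincareDist a b := by
  rw [poincareDist_eq, poincareDist_eq]
  exact artanh_mono (by linarith [pd_nonneg (h a) (h b)]) (schwarz_pick hd hm ha hb)
    (pd_lt_one a b ha hb)

lemma length_nonneg {x y : X} (c : AnalyticChain x y) : 0 ≤ c.length := by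
  apply Finset.sum_nonneg
  intro i _
  exact poincareDist_nonneg (mem_ball_iff_abs.mp (c.z_mem i)) (mem_ball_iff_abs.mp (c.w_mem i))

lemma bddBelow_lengths (x y : X) :
    BddBelow (Set.range fun c : AnalyticChain x y => c.length) := by
  refine ⟨0, ?_⟩
  rintro r ⟨c, rfl⟩
  exact length_nonneg c

lemma kobayashiDist_le_length {x y : X} (c : AnalyticChain x y) :
    kobayashiDist x y ≤ c.length :=
  csInf_le (bddBelow_lengths x y) ⟨c, rfl⟩

/-- single chain -/
noncomputable def singleChain (u : X) (hu : ‖u‖ ≤ 1) (p q : ℂ)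
    (hp : p ∈ Metric.ball (0:ℂ) 1) (hq : q ∈ Metric.ball (0:ℂ) 1) :
    AnalyticChain (p • u) (q • u) where
  n := 0
  f := fun _ c => c • u
  z := fun _ => p
  w := fun _ => q
  holo := fun _ => (differentiable_id.smul_const u).differentiableOn
  maps := by
    intro _ c hc
    rw [mem_ball_zero_iff] at hc ⊢
    calc ‖c • u‖ = ‖c‖ * ‖u‖ := norm_smul c u
      _ ≤ ‖c‖ * 1 := by
          apply mul_le_mul_of_nonneg_left hu (norm_nonneg c)
      _ < 1 := by rwa [mul_one]
  z_mem := fun _ => hp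
  w_mem := fun _ => hq
  first := rfl
  last := rfl
  link := fun i => i.elim0

lemma singleChain_length (u : X) (hu : ‖u‖ ≤ 1) (p q : ℂ)
    (hp : p ∈ Metric.ball (0:ℂ) 1) (hq : q ∈ Metric.ball (0:ℂ) 1) :
    (singleChain u hu p q hp hq).length = poincareDist p q := by
  show ∑ _i : Fin (0+1), poincareDist p q = poincareDist p q
  simp

lemma kobayashiDist_le_poincare (u : X) (hu : ‖u‖ ≤ 1) (p q : ℂ)
    (hp : p ∈ Metric.ball (0:ℂ) 1) (hq : q ∈ Metric.ball (0:ℂ) 1) :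
    kobayashiDist (p • u) (q • u) ≤ poincareDist p q := by
  rw [← singleChain_length u hu p q hp hq]
  exact kobayashiDist_le_length _

lemma abs_g_lt {g : X →L[ℂ] ℂ} (hg : ‖g‖ ≤ 1) {v : X} (hv : v ∈ Metric.ball (0:X) 1) :
    ‖g v‖ < 1 := by
  rw [mem_ball_zero_iff] at hv
  calc ‖g v‖ = ‖g v‖ := rfl
    _ ≤ ‖g‖ * ‖v‖ := g.le_opNorm v
    _ ≤ 1 * ‖v‖ := mul_le_mul_of_nonneg_right hg (norm_nonneg v)
    _ < 1 := by rwa [one_mul]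

lemma poincare_le_length {x y : X} (g : X →L[ℂ] ℂ) (hg : ‖g‖ ≤ 1)
    (c : AnalyticChain x y) : poincareDist (g x) (g y) ≤ c.length := by
  set n := c.n with hn
  -- the composed maps
  have hcomp : ∀ i : Fin (n+1), DifferentiableOn ℂ (fun t => g (c.f i t)) (Metric.ball 0 1) :=
    fun i => g.differentiable.comp_differentiableOn (c.holo i)
  have hcm : ∀ i : Fin (n+1), Set.MapsTo (fun t => g (c.f i t))
      (Metric.ball (0:ℂ) 1) (Metric.ball (0:ℂ) 1) := by
    intro i t ht
    exact mem_ball_iff_abs.mpr (abs_g_lt hg (c.maps i t ht))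
  have hSP : ∀ i : Fin (n+1),
      poincareDist (g (c.f i (c.z i))) (g (c.f i (c.w i))) ≤ poincareDist (c.z i) (c.w i) :=
    fun i => poincare_SP (hcomp i) (hcm i) (mem_ball_iff_abs.mp (c.z_mem i))
      (mem_ball_iff_abs.mp (c.w_mem i))
  -- all relevant points in the disc
  have hball : ∀ i : Fin (n+1), ∀ t ∈ Metric.ball (0:ℂ) 1, ‖g (c.f i t)‖ < 1 :=
    fun i t ht => abs_g_lt hg (c.maps i t ht)
  have hx : ‖g x‖ < 1 := by
    rw [← c.first]; exact hball 0 _ (c.z_mem 0)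
  -- nat-indexed summands
  set d : ℕ → ℝ := fun i => if h : i < n+1 then poincareDist (c.z ⟨i,h⟩) (c.w ⟨i,h⟩) else 0
    with hd
  have key : ∀ m : ℕ, ∀ hm : m < n + 1,
      poincareDist (g x) (g (c.f ⟨m,hm⟩ (c.w ⟨m,hm⟩))) ≤ ∑ i ∈ Finset.range (m+1), d i := by
    intro m
    induction m with
    | zero =>
      intro hm
      rw [Finset.sum_range_one]
      have h0 : d 0 = poincareDist (c.z ⟨0,hm⟩) (c.w ⟨0,hm⟩) := by
        rw [hd]; simp
      have hfz : c.f ⟨0,hm⟩ (c.z ⟨0,hm⟩) = x := by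
        have : (⟨0,hm⟩ : Fin (n+1)) = 0 := Fin.mk_zero
        rw [this]; exact c.first
      rw [h0]
      have h1 := hSP ⟨0, hm⟩
      rwa [hfz] at h1
    | succ m ih =>
      intro hm
      have hm' : m < n + 1 := by omega
      have hmn : m < n := by omega
      set i : Fin n := ⟨m, hmn⟩ with hi
      have hlink : c.f ⟨m, hm'⟩ (c.w ⟨m, hm'⟩) = c.f ⟨m+1, hm⟩ (c.z ⟨m+1, hm⟩) := c.link i
      have htri : poincareDist (g x) (g (c.f ⟨m+1,hm⟩ (c.w ⟨m+1,hm⟩)))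
          ≤ poincareDist (g x) (g (c.f ⟨m+1,hm⟩ (c.z ⟨m+1,hm⟩)))
            + poincareDist (g (c.f ⟨m+1,hm⟩ (c.z ⟨m+1,hm⟩))) (g (c.f ⟨m+1,hm⟩ (c.w ⟨m+1,hm⟩))) :=
        poincareDist_triangle hx (hball _ _ (c.z_mem _)) (hball _ _ (c.w_mem _))
      have hstep := hSP ⟨m+1, hm⟩
      have hdm : d (m+1) = poincareDist (c.z ⟨m+1,hm⟩) (c.w ⟨m+1,hm⟩) := by
        rw [hd]; simp [hm]
      rw [Finset.sum_range_succ, hdm]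
      have ihm := ih hm'
      rw [hlink] at ihm
      linarith
  have hlen : c.length = ∑ i ∈ Finset.range (n+1), d i := by
    unfold AnalyticChain.length
    rw [← Fin.sum_univ_eq_sum_range d (n+1)]
    apply Finset.sum_congr rfl
    intro i _
    rw [hd]
    simp [i.isLt]
    intro h; have := i.isLt; omega
  have hy : c.f ⟨n, n.lt_succ_self⟩ (c.w ⟨n, n.lt_succ_self⟩) = y := c.last
  have := key n n.lt_succ_self
  rw [hy] at this
  rw [hlen]
  exact this

lemma poincare_le_kobayashi {x y : X} (g : X →L[ℂ] ℂ) (hg : ‖g‖ ≤ 1)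
    (hne : Nonempty (AnalyticChain x y)) :
    poincareDist (g x) (g y) ≤ kobayashiDist x y := by
  apply le_csInf
  · obtain ⟨c⟩ := hne
    exact ⟨c.length, ⟨c, rfl⟩⟩
  · rintro r ⟨c, rfl⟩
    exact poincare_le_length g hg c

lemma kobayashiDist_nonneg {x y : X} (hne : Nonempty (AnalyticChain x y)) :
    0 ≤ kobayashiDist x y := by
  apply le_csInf
  · obtain ⟨c⟩ := hne
    exact ⟨c.length, ⟨c, rfl⟩⟩
  · rintro r ⟨c, rfl⟩
    exact length_nonneg c

lemma real_mem_ball {t : ℝ} (h0 : 0 ≤ t) (h1 : t < 1) : ((t:ℂ)) ∈ Metric.ball (0:ℂ) 1 := by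
  rw [mem_ball_zero_iff, Complex.norm_real, Real.norm_eq_abs, _root_.abs_of_nonneg h0]
  exact h1

lemma neg_real_mem_ball {t : ℝ} (h0 : 0 ≤ t) (h1 : t < 1) :
    (-(t:ℂ)) ∈ Metric.ball (0:ℂ) 1 := by
  rw [mem_ball_zero_iff, norm_neg, Complex.norm_real, Real.norm_eq_abs, _root_.abs_of_nonneg h0]
  exact h1

lemma poincare_zero_right (t : ℝ) (h0 : 0 ≤ t) : poincareDist (t:ℂ) 0 = artanh t := by
  rw [poincareDist_eq, pd_zero_right, Complex.norm_real, Real.norm_eq_abs, _root_.abs_of_nonneg h0]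

lemma poincare_neg (t : ℝ) (h0 : 0 ≤ t) (h1 : t < 1) :
    poincareDist (t:ℂ) (-(t:ℂ)) = 2 * artanh t := by
  rw [poincareDist_eq]
  unfold pd
  have e1 : ((t:ℂ) - (-(t:ℂ))) = (((t + t) : ℝ) : ℂ) := by push_cast; ring
  have e2 : 1 - (starRingEnd ℂ) (t:ℂ) * (-(t:ℂ)) = (((1 + t*t) : ℝ) : ℂ) := by
    rw [Complex.conj_ofReal]; push_cast; ring
  rw [e1, e2, Complex.norm_real, Real.norm_eq_abs, Complex.norm_real, Real.norm_eq_abs,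
    _root_.abs_of_nonneg (by linarith : (0:ℝ) ≤ t + t),
    _root_.abs_of_nonneg (by nlinarith : (0:ℝ) ≤ 1 + t*t)]
  rw [← artanh_add h0 h1 h0 h1]
  ring

theorem kob_main (A : X) (hA : ‖A‖ < 1) :
    kobayashiDist A (-A) = 2 * kobayashiDist A (0 : X) := by
  rcases eq_or_ne A 0 with rfl | hA0
  · rw [neg_zero]
    have h0 : kobayashiDist (0:X) (0:X) = 0 := by
      have hzero : ((0:ℂ) • (0:X)) = (0:X) := by simp
      have hch : AnalyticChain (0:X) (0:X) := by
        rw [← hzero]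
        exact singleChain (0:X) (by simp) 0 0 (by simp) (by simp)
      have hub : kobayashiDist (0:X) (0:X) ≤ poincareDist 0 0 := by
        have := kobayashiDist_le_poincare (0:X) (by simp) 0 0 (by simp) (by simp)
        rwa [hzero] at this
      have hp0 : poincareDist (0:ℂ) 0 = 0 := by
        have := poincare_zero_right 0 le_rfl
        simpa [artanh_zero] using this
      rw [hp0] at hub
      exact le_antisymm hub (kobayashiDist_nonneg ⟨hch⟩)
    rw [h0]; ring
  · set t := ‖A‖ with ht
    have ht0 : 0 < t := norm_pos_iff.mpr hA0
    have htc : (t:ℂ) ≠ 0 := by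
      simp only [ne_eq, Complex.ofReal_eq_zero]
      exact ht0.ne'
    set u : X := ((t:ℂ))⁻¹ • A with hu
    have huA : (t:ℂ) • u = A := by
      rw [hu, smul_smul, mul_inv_cancel₀ htc, one_smul]
    have hunegA : (-(t:ℂ)) • u = -A := by
      rw [neg_smul, huA]
    have hu0 : (0:ℂ) • u = (0:X) := zero_smul _ _
    have hun : ‖u‖ ≤ 1 := by
      rw [hu, norm_smul, norm_inv, Complex.norm_real, Real.norm_eq_abs, _root_.abs_of_nonneg ht0.le]
      rw [← ht]
      rw [inv_mul_cancel₀ ht0.ne']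
    have hmem := real_mem_ball ht0.le hA
    have hmem' := neg_real_mem_ball ht0.le hA
    have hmem0 : (0:ℂ) ∈ Metric.ball (0:ℂ) 1 := by simp
    -- upper bounds
    have hub1 : kobayashiDist A (-A) ≤ 2 * artanh t := by
      have := kobayashiDist_le_poincare u hun (t:ℂ) (-(t:ℂ)) hmem hmem'
      rw [huA, hunegA] at this
      rwa [poincare_neg t ht0.le hA] at this
    have hub2 : kobayashiDist A (0:X) ≤ artanh t := by
      have := kobayashiDist_le_poincare u hun (t:ℂ) 0 hmem hmem0
      rw [huA, hu0] at this
      rwa [poincare_zero_right t ht0.le] at this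
    -- the dual functional
    obtain ⟨g, hg1, hg2⟩ := exists_dual_vector ℂ A (norm_ne_zero_iff.mpr hA0)
    have hgle : ‖g‖ ≤ 1 := le_of_eq hg1
    have hgA : g A = (t:ℂ) := by rw [hg2]; rfl
    have hgnA : g (-A) = -(t:ℂ) := by rw [map_neg, hgA]
    have hg0 : g (0:X) = 0 := map_zero g
    -- nonempty chains
    have hne1 : Nonempty (AnalyticChain A (-A)) := by
      refine ⟨?_⟩
      have := singleChain u hun (t:ℂ) (-(t:ℂ)) hmem hmem'
      rwa [huA, hunegA] at this
    have hne2 : Nonempty (AnalyticChain A (0:X)) := by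
      refine ⟨?_⟩
      have := singleChain u hun (t:ℂ) 0 hmem hmem0
      rwa [huA, hu0] at this
    have hlb1 : 2 * artanh t ≤ kobayashiDist A (-A) := by
      have := poincare_le_kobayashi g hgle hne1
      rwa [hgA, hgnA, poincare_neg t ht0.le hA] at this
    have hlb2 : artanh t ≤ kobayashiDist A (0:X) := by
      have := poincare_le_kobayashi g hgle hne2
      rwa [hgA, hg0, poincare_zero_right t ht0.le] at this
    have e1 : kobayashiDist A (-A) = 2 * artanh t := le_antisymm hub1 hlb1
    have e2 : kobayashiDist A (0:X) = artanh t := le_antisymm hub2 hlb2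
    rw [e1, e2]


section ClosedDenseOperators

variable {H K : Type*} [NormedAddCommGroup H] [InnerProductSpace ℂ H] [CompleteSpace H]
  [NormedAddCommGroup K] [InnerProductSpace ℂ K] [CompleteSpace K]

/-- `C(H,K)`: the closed densely-defined linear operators from `H` to `K`. -/
def ClosedDenseOp (H K : Type*) [NormedAddCommGroup H] [InnerProductSpace ℂ H]
    [NormedAddCommGroup K] [InnerProductSpace ℂ K] : Type _ :=
  {T : H →ₗ.[ℂ] K // Dense (T.domain : Set H) ∧ T.IsClosed}

/-- `IsHat T A` says that the bounded operator `A : K → H` is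
`Ṫ = (I + T*T)^{-1/2} T*`:  there are bounded positive operators `B` and `R` on `H` such
that `B` is the (everywhere defined) inverse of `I + T*T`, `R` is the positive square root
of `B` (so `R = (I + T*T)^{-1/2}`), the adjoint `T*` is everywhere defined, `‖A‖ < 1`
and `A y = R (T* y)` for all `y`. -/
def IsHat (T : H →ₗ.[ℂ] K) (A : K →L[ℂ] H) : Prop :=
  ∃ B R : H →L[ℂ] H, B.IsPositive ∧
    (∀ p : {p : T.domain // T p ∈ T.adjoint.domain},
      B ((p.1 : H) + T.adjoint ⟨T p.1, p.2⟩) = (p.1 : H)) ∧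
    (∀ y : H, ∃ p : {p : T.domain // T p ∈ T.adjoint.domain},
      (p.1 : H) + T.adjoint ⟨T p.1, p.2⟩ = y) ∧
    R.IsPositive ∧ R * R = B ∧
    T.adjoint.domain = ⊤ ∧ ‖A‖ < 1 ∧
    ∀ y : K, ∀ hy : y ∈ T.adjoint.domain, A y = R (T.adjoint ⟨y, hy⟩)

set_option linter.unusedSectionVars false

lemma adjoint_neg_apply {X : H →ₗ.[ℂ] K} (hdense : Dense (X.domain : Set H))
    (z : K) (hz' : z ∈ (-X).adjoint.domain) (hz : z ∈ X.adjoint.domain) :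
    (-X).adjoint ⟨z, hz'⟩ = -(X.adjoint ⟨z, hz⟩) := by
  have hdense' : Dense ((-X).domain : Set H) := hdense
  apply LinearPMap.adjoint_apply_eq hdense'
  intro x
  have hfa := LinearPMap.adjoint_isFormalAdjoint hdense
  have h1 : (-X) x = -(X x) := LinearPMap.neg_apply X x
  rw [h1, inner_neg_right, inner_neg_left]
  congr 1
  exact hfa ⟨z, hz⟩ x

set_option synthInstance.maxHeartbeats 1000000 in
lemma isHat_neg_eq {X : H →ₗ.[ℂ] K} (hdense : Dense (X.domain : Set H))
    {A A' : K →L[ℂ] H} (hA : IsHat X A) (hA' : IsHat (-X) A') : A' = -A := by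
  obtain ⟨B, R, hBpos, hBinv, hBsurj, hRpos, hRR, hdom, hAnorm, hAeq⟩ := hA
  obtain ⟨B', R', hBpos', hBinv', hBsurj', hRpos', hRR', hdom', hAnorm', hAeq'⟩ := hA'
  have memX : ∀ v : K, v ∈ X.adjoint.domain := by
    intro v; rw [hdom]; exact Submodule.mem_top
  have memnX : ∀ v : K, v ∈ (-X).adjoint.domain := by
    intro v; rw [hdom']; exact Submodule.mem_top
  -- B' = B
  have hBB : B' = B := by
    ext y
    obtain ⟨p, hp⟩ := hBsurj y
    -- the corresponding point for -X
    have hqmem : (-X) (p.1 : X.domain) ∈ (-X).adjoint.domain := memnX _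
    set q : {q : (-X).domain // (-X) q ∈ (-X).adjoint.domain} := ⟨p.1, hqmem⟩ with hq
    have hXq : (-X) (q.1) = -(X p.1) := LinearPMap.neg_apply X p.1
    have hsub : ((⟨(-X) q.1, q.2⟩ : (-X).adjoint.domain) : K) = -(X p.1) := hXq
    have hval : (-X).adjoint ⟨(-X) q.1, q.2⟩ = X.adjoint ⟨X p.1, p.2⟩ := by
      have e1 : (-X).adjoint ⟨(-X) q.1, q.2⟩ = -(X.adjoint ⟨(-X) q.1, memX _⟩) :=
        adjoint_neg_apply hdense _ _ _
      rw [e1]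
      have e2 : (⟨(-X) q.1, memX _⟩ : X.adjoint.domain) = -(⟨X p.1, p.2⟩ : X.adjoint.domain) := by
        apply Subtype.ext
        exact hXq
      rw [e2, LinearPMap.map_neg, neg_neg]
    have hsum : (q.1 : H) + (-X).adjoint ⟨(-X) q.1, q.2⟩ = y := by
      rw [hval]
      exact hp
    have h1 : B' y = (q.1 : H) := by rw [← hsum]; exact hBinv' q
    have h2 : B y = (p.1 : H) := by rw [← hp]; exact hBinv p
    rw [h1, h2]
  -- R' = R
  have hRR2 : R' = R := by
    have h1 : CFC.sqrt B = R := CFC.sqrt_unique hRR ((R.nonneg_iff_isPositive).2 hRpos)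
    have h2 : CFC.sqrt B = R' := by
      rw [hBB] at hRR'
      exact CFC.sqrt_unique hRR' ((R'.nonneg_iff_isPositive).2 hRpos')
    rw [← h1, h2]
  -- conclude
  ext y
  rw [hAeq' y (memnX y), ContinuousLinearMap.neg_apply, hAeq y (memX y), hRR2]
  rw [adjoint_neg_apply hdense y (memnX y) (memX y)]
  exact map_neg R _

end ClosedDenseOperators

/-- In the metric space `(C(H,K), d)` (with `K` finite dimensional and
`d(T,S) = K_B(Ṫ,Ṡ)`), every `X` satisfies `d(X, -X) = 2 d(X, 0)`.  Here `A = X̂` and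
`A' = (-X)^` are the hats of `X` and `-X`, and the hat of the zero operator is `0`. -/
theorem dist_neg_self_eq_two_mul_dist_zero
    {H K : Type*} [NormedAddCommGroup H] [InnerProductSpace ℂ H] [CompleteSpace H]
    [NormedAddCommGroup K] [InnerProductSpace ℂ K] [CompleteSpace K]
    [FiniteDimensional ℂ K]
    (X : H →ₗ.[ℂ] K) (hdense : Dense (X.domain : Set H)) (hclosed : X.IsClosed)
    (A A' : K →L[ℂ] H) (hA : IsHat X A) (hA' : IsHat (-X) A') :
    kobayashiDist A A' = 2 * kobayashiDist A (0 : K →L[ℂ] H) := by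
  have hAA' : A' = -A := isHat_neg_eq hdense hA hA'
  obtain ⟨B, R, _, _, _, _, _, _, hAnorm, _⟩ := hA
  rw [hAA']
  exact kob_main A hAnorm
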